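/- Let U be a finite set, and for each u ∈ U let δ_u > 0, S_u ≥ 0, and I_u > 0 be real numbers. Then the supremum over all γ : U → ℝ with γ_u ≥ 0 of f₁(γ) = ∑_{u∈U} [δ_u·(log(1+γ_u) − γ_u) + δ_u·(1+γ_u)·S_u/(S_u+I_u)] equals the weighted sum rate ∑_{u∈U} δ_u·log(1 + S_u/I_u), and it is attained exactly at γ_u = S_u/I_u for every u. -/

import Mathlib

private lemma per_user (S I t : ℝ) (hS : 0 ≤ S) (hI : 0 < I) (ht : 0 ≤ t) :
    Real.log (1 + t) - t + (1 + t) * S / (S + I) ≤ Real.log (1 + S / I) ∧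
    (Real.log (1 + t) - t + (1 + t) * S / (S + I) = Real.log (1 + S / I) ↔ t = S / I) := by
  have hSI : 0 < S + I := by linarith
  have h1t : 0 < 1 + t := by linarith
  set x : ℝ := (1 + t) * I / (S + I) with hxdef
  have hx : 0 < x := by positivity
  have hlogx : Real.log x = Real.log (1 + t) - Real.log (1 + S / I) := by
    have h1 : (1 : ℝ) + S / I = (S + I) / I := by field_simp; ring
    rw [h1, hxdef, Real.log_div (by positivity) (by positivity),
        Real.log_div (by positivity) (by positivity),
        Real.log_mul (by positivity) (by positivity)]
    ring
  have hkey : Real.log (1 + t) - t + (1 + t) * S / (S + I) - Real.log (1 + S / I)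
      = Real.log x - (x - 1) := by
    rw [hlogx, hxdef]; field_simp; ring
  have hle : Real.log x ≤ x - 1 := Real.log_le_sub_one_of_pos hx
  refine ⟨by linarith, ?_, ?_⟩
  · intro h
    have hx1 : x = 1 := by
      by_contra hne
      have := Real.log_lt_sub_one_of_pos hx hne
      linarith
    have h2 : (1 + t) * I = S + I := by
      have := hx1
      field_simp [hxdef] at this
      rw [hxdef, div_eq_one_iff_eq hSI.ne'] at this; linarith
    have : t * I = S := by nlinarith
    field_simp
    linarith
  · intro h
    subst h
    have hx1 : x = 1 := by
      rw [hxdef]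
      field_simp
      ring
    have : Real.log x = 0 := by rw [hx1]; simp
    linarith [hkey, hx1]

/-- Equivalence of the weighted-sum-rate problem and its Lagrangian-dual reformulation
for fixed beamformers: the supremum of
`f₁(γ) = ∑ u, δ_u (log(1+γ_u) − γ_u) + δ_u (1+γ_u) S_u/(S_u+I_u)` over nonnegative `γ`
equals the weighted sum rate `∑ u, δ_u log(1 + S_u/I_u)`, attained exactly at
`γ_u = S_u/I_u`. -/
theorem dual_reformulation_sup (U : Type*) [Fintype U]
    (δ S I : U → ℝ) (hδ : ∀ u, 0 < δ u) (hS : ∀ u, 0 ≤ S u) (hI : ∀ u, 0 < I u)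
    (f : (U → ℝ) → ℝ)
    (hf : ∀ γ : U → ℝ, f γ = ∑ u, (δ u * (Real.log (1 + γ u) - γ u)
        + δ u * (1 + γ u) * S u / (S u + I u))) :
    IsGreatest {y : ℝ | ∃ γ : U → ℝ, (∀ u, 0 ≤ γ u) ∧ f γ = y}
      (∑ u, δ u * Real.log (1 + S u / I u)) ∧
    (∀ γ : U → ℝ, (∀ u, 0 ≤ γ u) →
      (f γ = ∑ u, δ u * Real.log (1 + S u / I u) ↔ γ = fun u => S u / I u)) := by
  -- term-level facts
  have hterm_le : ∀ (γ : U → ℝ), (∀ u, 0 ≤ γ u) → ∀ u,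
      δ u * (Real.log (1 + γ u) - γ u) + δ u * (1 + γ u) * S u / (S u + I u)
        ≤ δ u * Real.log (1 + S u / I u) := by
    intro γ hγ u
    have h := (per_user (S u) (I u) (γ u) (hS u) (hI u) (hγ u)).1
    have hre : δ u * (Real.log (1 + γ u) - γ u) + δ u * (1 + γ u) * S u / (S u + I u)
        = δ u * (Real.log (1 + γ u) - γ u + (1 + γ u) * S u / (S u + I u)) := by ring
    rw [hre]
    exact mul_le_mul_of_nonneg_left h (hδ u).le
  have hterm_lt : ∀ (γ : U → ℝ), (∀ u, 0 ≤ γ u) → ∀ u, γ u ≠ S u / I u →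
      δ u * (Real.log (1 + γ u) - γ u) + δ u * (1 + γ u) * S u / (S u + I u)
        < δ u * Real.log (1 + S u / I u) := by
    intro γ hγ u hne
    have h := per_user (S u) (I u) (γ u) (hS u) (hI u) (hγ u)
    have hlt : Real.log (1 + γ u) - γ u + (1 + γ u) * S u / (S u + I u)
        < Real.log (1 + S u / I u) :=
      lt_of_le_of_ne h.1 (fun heq => hne (h.2.mp heq))
    have hre : δ u * (Real.log (1 + γ u) - γ u) + δ u * (1 + γ u) * S u / (S u + I u)
        = δ u * (Real.log (1 + γ u) - γ u + (1 + γ u) * S u / (S u + I u)) := by ring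
    rw [hre]
    exact mul_lt_mul_of_pos_left hlt (hδ u)
  have hopt : f (fun u => S u / I u) = ∑ u, δ u * Real.log (1 + S u / I u) := by
    rw [hf]
    refine Finset.sum_congr rfl fun u _ => ?_
    have h := (per_user (S u) (I u) (S u / I u) (hS u) (hI u)
      (div_nonneg (hS u) (hI u).le)).2.mpr rfl
    have hre : δ u * (Real.log (1 + S u / I u) - S u / I u)
        + δ u * (1 + S u / I u) * S u / (S u + I u)
        = δ u * (Real.log (1 + S u / I u) - S u / I u
            + (1 + S u / I u) * S u / (S u + I u)) := by ring
    rw [hre, h]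
  have hub : ∀ γ : U → ℝ, (∀ u, 0 ≤ γ u) → f γ ≤ ∑ u, δ u * Real.log (1 + S u / I u) := by
    intro γ hγ
    rw [hf]
    exact Finset.sum_le_sum fun u _ => hterm_le γ hγ u
  refine ⟨⟨⟨fun u => S u / I u, fun u => div_nonneg (hS u) (hI u).le, hopt⟩, ?_⟩, ?_⟩
  · rintro y ⟨γ, hγ, rfl⟩
    exact hub γ hγ
  · intro γ hγ
    constructor
    · intro h
      funext u
      by_contra hne
      have hstrict : f γ < ∑ u, δ u * Real.log (1 + S u / I u) := by
        rw [hf]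
        exact Finset.sum_lt_sum (fun v _ => hterm_le γ hγ v)
          ⟨u, Finset.mem_univ u, hterm_lt γ hγ u hne⟩
      linarith [h]
    · rintro rfl
      exact hopt
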